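/- Let q be an odd prime and let P, Q be integers with Q not divisible by q. If the Legendre symbol ((P² − 4Q)/q) equals 1, then V_{(q−1)/2}(P, Q)² ≡ (Q^{(q−1)/2} + 1)² (mod q²). -/

import Mathlib

/-- The Lucas sequence of the second kind `V_n(P, Q)`:
`V_0 = 2`, `V_1 = P`, `V_i = P * V_{i-1} - Q * V_{i-2}`. -/
def lucasV (P Q : ℤ) : ℕ → ℤ
  | 0 => 2
  | 1 => P
  | n + 2 => P * lucasV P Q (n + 1) - Q * lucasV P Q n

lemma lucasV_modEq (N P Q a b : ℤ) (h1 : a + b ≡ P [ZMOD N]) (h2 : a * b ≡ Q [ZMOD N]) :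
    ∀ n, lucasV P Q n ≡ a ^ n + b ^ n [ZMOD N] ∧
      lucasV P Q (n + 1) ≡ a ^ (n + 1) + b ^ (n + 1) [ZMOD N] := by
  intro n
  induction n with
  | zero =>
    refine ⟨by simp [lucasV], ?_⟩
    simpa [lucasV] using h1.symm
  | succ k ih =>
    refine ⟨ih.2, ?_⟩
    have hrec : lucasV P Q (k + 2) = P * lucasV P Q (k + 1) - Q * lucasV P Q k := rfl
    rw [hrec]
    calc P * lucasV P Q (k + 1) - Q * lucasV P Q k
        ≡ (a + b) * (a ^ (k + 1) + b ^ (k + 1)) - (a * b) * (a ^ k + b ^ k) [ZMOD N] :=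
          (h1.symm.mul ih.2).sub (h2.symm.mul ih.1)
      _ = a ^ (k + 2) + b ^ (k + 2) := by ring

/-- **Theorem 4, (13).** If `q` is an odd prime, `q ∤ Q` and `(P² - 4Q / q) = 1`,
then `V_{(q-1)/2}(P, Q)² ≡ (Q^{(q-1)/2} + 1)² (mod q²)`. -/
theorem lucasV_half_sq_congr (q : ℕ) [Fact q.Prime] (hodd : Odd q) (P Q : ℤ)
    (hQ : ¬ (q : ℤ) ∣ Q) (hleg : legendreSym q (P ^ 2 - 4 * Q) = 1) :
    lucasV P Q ((q - 1) / 2) ^ 2 ≡ (Q ^ ((q - 1) / 2) + 1) ^ 2 [ZMOD (q : ℤ) ^ 2] := by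
  have hqp : q.Prime := Fact.out
  obtain ⟨r, hr⟩ := hodd
  have hq3 : 3 ≤ q := by
    rcases hqp.two_le.lt_or_eq with h | h
    · omega
    · omega
  set D : ℤ := P ^ 2 - 4 * Q with hD
  -- square root of D mod q
  have hDne : ((D : ℤ) : ZMod q) ≠ 0 := by
    intro h
    rw [(legendreSym.eq_zero_iff q D).mpr h] at hleg
    exact absurd hleg (by norm_num)
  obtain ⟨z, hz⟩ : IsSquare ((D : ℤ) : ZMod q) := (legendreSym.eq_one_iff q hDne).mp hleg
  have hzne : z ≠ 0 := by
    intro h; rw [h, mul_zero] at hz; exact hDne hz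
  set y : ℤ := (z.val : ℤ) with hy
  have hyz : ((y : ℤ) : ZMod q) = z := by
    push_cast [hy]; simp [ZMod.natCast_val, ZMod.cast_id]
  have hy2 : (q : ℤ) ∣ D - y ^ 2 := by
    rw [← ZMod.intCast_zmod_eq_zero_iff_dvd]
    push_cast
    rw [hyz, hz]; ring
  obtain ⟨k, hk⟩ := hy2
  -- 2 ≠ 0 mod q
  have h2ne : (2 : ZMod q) ≠ 0 := by
    have : ((2 : ℕ) : ZMod q) ≠ 0 := by
      rw [Ne, ZMod.natCast_eq_zero_iff]
      intro h
      have := Nat.le_of_dvd (by norm_num) h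
      omega
    simpa using this
  -- Hensel lift: s² ≡ D mod q²
  set w : ZMod q := (2 * z)⁻¹ * (k : ZMod q) with hw
  set t : ℤ := (w.val : ℤ) with ht
  have htw : ((t : ℤ) : ZMod q) = w := by
    push_cast [ht]; simp [ZMod.natCast_val, ZMod.cast_id]
  have h2zw : (q : ℤ) ∣ 2 * y * t - k := by
    rw [← ZMod.intCast_zmod_eq_zero_iff_dvd]
    push_cast
    rw [hyz, htw, hw]
    have h2z : (2 * z) ≠ 0 := mul_ne_zero h2ne hzne
    field_simp
    ring
  obtain ⟨u, hu⟩ := h2zw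
  set s : ℤ := y + t * q with hs
  have hsD : s ^ 2 - D = (q : ℤ) ^ 2 * (u + t ^ 2) := by
    have : D = y ^ 2 + (q : ℤ) * k := by linarith [hk]
    rw [hs, this]
    linear_combination (q : ℤ) * hu
  -- the half of q²+1
  have hqodd : Odd ((q : ℤ) ^ 2) := by
    have : Odd (q : ℤ) := ⟨r, by push_cast [hr]; ring⟩
    exact this.pow
  obtain ⟨j, hj⟩ := hqodd
  set i2 : ℤ := j + 1 with hi2def
  have hi2 : 2 * i2 = (q : ℤ) ^ 2 + 1 := by omega
  have h4 : 4 * i2 ^ 2 = ((q : ℤ) ^ 2 + 1) ^ 2 := by linear_combination (2 * i2 + (q:ℤ)^2 + 1) * hi2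
  set a : ℤ := (P + s) * i2 with ha
  set b : ℤ := (P - s) * i2 with hb
  have h1 : a + b ≡ P [ZMOD (q : ℤ) ^ 2] := by
    rw [Int.modEq_iff_dvd]
    exact ⟨-P, by linear_combination (-P) * hi2⟩
  have h2 : a * b ≡ Q [ZMOD (q : ℤ) ^ 2] := by
    rw [Int.modEq_iff_dvd]
    exact ⟨(u + t ^ 2) * i2 ^ 2 - Q * ((q : ℤ) ^ 2 + 2),
      by linear_combination i2 ^ 2 * hsD - Q * h4⟩
  -- a, b are units mod q
  have hab_q : a * b ≡ Q [ZMOD (q : ℤ)] := h2.of_dvd (dvd_pow_self _ two_ne_zero)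
  have haq : ¬ (q : ℤ) ∣ a := by
    intro h
    have hd : (q : ℤ) ∣ Q - a * b := hab_q.dvd
    exact hQ (by simpa using dvd_add hd (h.mul_right b))
  have hbq : ¬ (q : ℤ) ∣ b := by
    intro h
    have hd : (q : ℤ) ∣ Q - a * b := hab_q.dvd
    exact hQ (by simpa [mul_comm] using dvd_add hd (h.mul_left a))
  -- Fermat
  have fermat : ∀ c : ℤ, ¬ (q : ℤ) ∣ c → (q : ℤ) ∣ c ^ (q - 1) - 1 := by
    intro c hc
    have hc0 : ((c : ℤ) : ZMod q) ≠ 0 := by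
      rwa [Ne, ZMod.intCast_zmod_eq_zero_iff_dvd]
    have hpow := ZMod.pow_card_sub_one_eq_one hc0
    rw [← ZMod.intCast_zmod_eq_zero_iff_dvd]
    push_cast
    rw [hpow]; ring
  set m : ℕ := (q - 1) / 2 with hm
  have hm2 : q - 1 = m * 2 := by omega
  have ha1 : (q : ℤ) ∣ (a ^ m) ^ 2 - 1 := by
    have h' := fermat a haq; rwa [hm2, pow_mul] at h'
  have hb1 : (q : ℤ) ∣ (b ^ m) ^ 2 - 1 := by
    have h' := fermat b hbq; rwa [hm2, pow_mul] at h'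
  have hVm : lucasV P Q m ≡ a ^ m + b ^ m [ZMOD (q : ℤ) ^ 2] :=
    (lucasV_modEq _ P Q a b h1 h2 m).1
  have hQm : (Q ^ m + 1 : ℤ) ≡ (a * b) ^ m + 1 [ZMOD (q : ℤ) ^ 2] :=
    (h2.symm.pow m).add_right 1
  have hkey : (a ^ m + b ^ m) ^ 2 ≡ ((a * b) ^ m + 1) ^ 2 [ZMOD (q : ℤ) ^ 2] := by
    clear_value a b
    rw [Int.modEq_iff_dvd]
    have hmul := mul_dvd_mul ha1 hb1
    rw [show ((a * b) ^ m + 1) ^ 2 - (a ^ m + b ^ m) ^ 2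
        = ((a ^ m) ^ 2 - 1) * ((b ^ m) ^ 2 - 1) by ring]
    simpa [sq] using hmul
  exact ((hVm.pow 2).trans hkey).trans (hQm.pow 2).symm
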